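/- Set f0 := x, f1 := yw²−ty+1, f2 := x+z. For each i ∈ {0,1,2}, if αi = 0 then fi is an invariant divisor of the D4^(3) system: the total derivative of fi along the Hamiltonian vector field, namely ∂fi/∂t + (∂H/∂y)(∂fi/∂x) − (∂H/∂x)(∂fi/∂y) + (∂H/∂w)(∂fi/∂z) − (∂H/∂z)(∂fi/∂w), is divisible by fi in the polynomial ring ℂ(t)[x,y,z,w]. -/

import Mathlib

/- STATEMENT 15: invariant divisors of the D4^(3) system.  For each i ∈ {0,1,2},
if αi = 0 then the total derivative of fi along the Hamiltonian vector field is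
divisible by fi.  Divisibility in ℂ(t)[x,y,z,w] is formalized as the existence
of a cofactor g with D fi = fi * g pointwise for all t with
(4t+3)(16t²−12t+9) ≠ 0 and all x,y,z,w. -/

open Complex

noncomputable def HD4 (a0 a1 a2 : ℂ) (t x y z w : ℂ) : ℂ :=
  (-(12*t*x^2*y^4) + 12*(x + 2*a0*t)*x*y^3
    + 3*((a0 + 14*a1 + 9*a2)*x - 4*a0^2*t)*y^2
    + (-(24*t*x^2) - 32*t^2*x - 3*a0*(5*a0 + 14*a1 + 9*a2))*y
    + 24*x*(x + (4*a0 + 7*a1 + 4*a2)*t)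
    - 12*t*z^2*w^4 - 12*(z - 2*(a0+a2)*t)*z*w^3
    + 3*(8*t^2*z^2 - (a0 + 6*a1 - 3*a2)*z - 4*(a0+a2)^2*t)*w^2
    + (12*t*z^2 - 8*(7*a0 + 8*a1 + 7*a2)*t^2*z + 3*(5 - 6*a1 - 8*a1^2 - 4*a2))*w
    - 3*((4*t^3 + 1)*z + (19*a0 + 10*a1 + 7*a2)*t)*z
    - 12*x*(-(4*t*x*w*y^3) + (4*x*w + 4*t*x*w^2 - 2*t*z*w^2 + z*w + 2*t^2*z)*y^2
        + (-(2*x*w^2) - 7*t*z - 4*t^2*z*w + z*w^2 + 4*t*z*w^3)*y + (8*t*w + 5)*z)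
    + 24*a0^2*t*y*w
    + 12*a1*x*w*(2*w - 7*y) + 6*a2*x*y*w*(4*t*(2*w - y) - 3)
    + 6*a0*y*(4*t*(2*x - z)*w^2 + (x - 12*t*x*y + 2*z)*w + 4*t^2*z)
    + 24*a0*a2*t*y*w) / ((4*t + 3)*(16*t^2 - 12*t + 9))

noncomputable def pdX (H : ℂ → ℂ → ℂ → ℂ → ℂ → ℂ) (t x y z w : ℂ) : ℂ :=
  deriv (fun s => H t s y z w) x

noncomputable def pdY (H : ℂ → ℂ → ℂ → ℂ → ℂ → ℂ) (t x y z w : ℂ) : ℂ :=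
  deriv (fun s => H t x s z w) y

noncomputable def pdZ (H : ℂ → ℂ → ℂ → ℂ → ℂ → ℂ) (t x y z w : ℂ) : ℂ :=
  deriv (fun s => H t x y s w) z

noncomputable def pdW (H : ℂ → ℂ → ℂ → ℂ → ℂ → ℂ) (t x y z w : ℂ) : ℂ :=
  deriv (fun s => H t x y z s) w

noncomputable def pdT (f : ℂ → ℂ → ℂ → ℂ → ℂ → ℂ) (t x y z w : ℂ) : ℂ :=
  deriv (fun s => f s x y z w) t

/-- Total derivative of `f` along the Hamiltonian vector field of `H`. -/
noncomputable def totalDeriv (H f : ℂ → ℂ → ℂ → ℂ → ℂ → ℂ) (t x y z w : ℂ) : ℂ :=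
  pdT f t x y z w
  + pdY H t x y z w * pdX f t x y z w
  - pdX H t x y z w * pdY f t x y z w
  + pdW H t x y z w * pdZ f t x y z w
  - pdZ H t x y z w * pdW f t x y z w


lemma deriv_quartic_div (a b c d e D : ℂ) (s : ℂ) :
    deriv (fun u => (a*u^4 + b*u^3 + c*u^2 + d*u + e) / D) s
      = (4*a*s^3 + 3*b*s^2 + 2*c*s + d) / D := by
  have h4 : HasDerivAt (fun u : ℂ => u^4) (4*s^3) s := by
    simpa using hasDerivAt_pow 4 s
  have h3 : HasDerivAt (fun u : ℂ => u^3) (3*s^2) s := by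
    simpa using hasDerivAt_pow 3 s
  have h2 : HasDerivAt (fun u : ℂ => u^2) (2*s) s := by
    simpa using hasDerivAt_pow 2 s
  have h1 : HasDerivAt (fun u : ℂ => u) 1 s := hasDerivAt_id s
  have big := ((((h4.const_mul a).add (h3.const_mul b)).add (h2.const_mul c)).add
      ((h1.const_mul d).add (hasDerivAt_const s e))).div_const D
  have e1 : (fun u : ℂ => (a*u^4 + b*u^3 + c*u^2 + d*u + e) / D)
      = fun u : ℂ => (a*u^4 + b*u^3 + c*u^2 + (d*u + e)) / D := by
    funext u; ring_nf
  rw [e1]; refine big.deriv.trans ?_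
  ring

lemma deriv_quartic (a b c d e : ℂ) (s : ℂ) :
    deriv (fun u => a*u^4 + b*u^3 + c*u^2 + d*u + e) s
      = 4*a*s^3 + 3*b*s^2 + 2*c*s + d := by
  have := deriv_quartic_div a b c d e 1 s
  simpa using this

lemma pdX_HD4 (a0 a1 a2 t y z w : ℂ) (x : ℂ) :
    pdX (HD4 a0 a1 a2) t x y z w =
      ((-60)*z + (-12)*y*z*w^2 + (-12)*y^2*z*w + 48*x + 48*x*y*w^2 + (-96)*x*y^2*w + 24*x*y^3 + (-96)*t*z*w + 84*t*y*z + (-48)*t*y*z*w^3 + 24*t*y^2*z*w^2 + (-48)*t*x*y + (-96)*t*x*y^2*w^2 + 96*t*x*y^3*w + (-24)*t*x*y^4 + (-32)*t^2*y + 48*t^2*y*z*w + (-24)*t^2*y^2*z + (-18)*a2*y*w + 27*a2*y^2 + 96*a2*t + 48*a2*t*y*w^2 + (-24)*a2*t*y^2*w + 24*a1*w^2 + (-84)*a1*y*w + 42*a1*y^2 + 168*a1*t + 6*a0*y*w + 3*a0*y^2 + 96*a0*t + 48*a0*t*y*w^2 + (-72)*a0*t*y^2*w + 24*a0*t*y^3)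 / ((4*t + 3)*(16*t^2 - 12*t + 9)) := by
  have e : (fun s => HD4 a0 a1 a2 t s y z w)
      = fun u => (((0:ℂ))*u^4 + ((0:ℂ))*u^3 + (24 + 24*y*w^2 + (-48)*y^2*w + 12*y^3 + (-24)*t*y + (-48)*t*y^2*w^2 + 48*t*y^3*w + (-12)*t*y^4)*u^2
          + ((-60)*z + (-12)*y*z*w^2 + (-12)*y^2*z*w + (-96)*t*z*w + 84*t*y*z + (-48)*t*y*z*w^3 + 24*t*y^2*z*w^2 + (-32)*t^2*y + 48*t^2*y*z*w + (-24)*t^2*y^2*z + (-18)*a2*y*w + 27*a2*y^2 + 96*a2*t + 48*a2*t*y*w^2 + (-24)*a2*t*y^2*w + 24*a1*w^2 + (-84)*a1*y*w + 42*a1*y^2 + 168*a1*t + 6*a0*y*w + 3*a0*y^2 + 96*a0*t + 48*a0*t*y*w^2 + (-72)*a0*t*y^2*w + 24*a0*t*y^3)*u + (15*w + (-3)*z^2 + (-12)*z^2*w^3 + 12*t*z^2*w + (-12)*t*z^2*w^4 + 24*t^2*z^2*w^2 + (-12)*t^3*z^2 + (-12)*a2*w + 9*a2*z*w^2 + (-21)*a2*t*z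 + 24*a2*t*z*w^3 + (-56)*a2*t^2*z*w + (-12)*a2^2*t*w^2 + (-18)*a1*w + (-18)*a1*z*w^2 + (-30)*a1*t*z + (-64)*a1*t^2*z*w + (-24)*a1^2*w + (-3)*a0*z*w^2 + 12*a0*y*z*w + (-57)*a0*t*z + 24*a0*t*z*w^3 + (-24)*a0*t*y*z*w^2 + (-56)*a0*t^2*z*w + 24*a0*t^2*y*z + (-27)*a0*a2*y + (-24)*a0*a2*t*w^2 + 24*a0*a2*t*y*w + (-42)*a0*a1*y + (-15)*a0^2*y + (-12)*a0^2*t*w^2 + 24*a0^2*t*y*w + (-12)*a0^2*t*y^2)) / ((4*t + 3)*(16*t^2 - 12*t + 9)) := by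
    funext u
    simp only [HD4]
    congr 1
    ring
  simp only [pdX]
  rw [e, deriv_quartic_div]
  congr 1
  ring

lemma pdY_HD4 (a0 a1 a2 t x z w : ℂ) (y : ℂ) :
    pdY (HD4 a0 a1 a2) t x y z w =
      ((-12)*x*z*w^2 + (-24)*x*y*z*w + 24*x^2*w^2 + (-96)*x^2*y*w + 36*x^2*y^2 + 84*t*x*z + (-48)*t*x*z*w^3 + 48*t*x*y*z*w^2 + (-24)*t*x^2 + (-96)*t*x^2*y*w^2 + 144*t*x^2*y^2*w + (-48)*t*x^2*y^3 + (-32)*t^2*x + 48*t^2*x*z*w + (-48)*t^2*x*y*z + (-18)*a2*x*w + 54*a2*x*y + 48*a2*t*x*w^2 + (-48)*a2*t*x*y*w + (-84)*a1*x*w + 84*a1*x*y + 12*a0*z*w + 6*a0*x*w + 6*a0*x*y + (-24)*a0*t*z*w^2 + 48*a0*t*x*w^2 + (-144)*a0*t*x*y*w + 72*a0*t*x*y^2 + 24*a0*t^2*z + (-27)*a0*a2 + 24*a0*a2*t*w + (-42)*a0*a1 + (-15)*a0^2 + 24*a0^2*t*w + (-24)*a0^2*t*y) / ((4*t + 3)*(16*t^2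 - 12*t + 9)) := by
  have e : (fun s => HD4 a0 a1 a2 t x s z w)
      = fun u => (((-12)*t*x^2)*u^4 + (12*x^2 + 48*t*x^2*w + 24*a0*t*x)*u^3 + ((-12)*x*z*w + (-48)*x^2*w + 24*t*x*z*w^2 + (-48)*t*x^2*w^2 + (-24)*t^2*x*z + 27*a2*x + (-24)*a2*t*x*w + 42*a1*x + 3*a0*x + (-72)*a0*t*x*w + (-12)*a0^2*t)*u^2
          + ((-12)*x*z*w^2 + 24*x^2*w^2 + 84*t*x*z + (-48)*t*x*z*w^3 + (-24)*t*x^2 + (-32)*t^2*x + 48*t^2*x*z*w + (-18)*a2*x*w + 48*a2*t*x*w^2 + (-84)*a1*x*w + 12*a0*z*w + 6*a0*x*w + (-24)*a0*t*z*w^2 + 48*a0*t*x*w^2 + 24*a0*t^2*z + (-27)*a0*a2 + 24*a0*a2*t*w + (-42)*a0*a1 + (-15)*a0^2 + 24*a0^2*t*w)*u + (15*w + (-3)*z^2 + (-12)*z^2*w^3 + (-60)*x*z + 24*x^2 + 12*t*z^2*w + (-12)*t*z^2*w^4 + (-96)*t*x*z*w + 24*t^2*z^2*w^2 + (-12)*t^3*z^2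 + (-12)*a2*w + 9*a2*z*w^2 + (-21)*a2*t*z + 24*a2*t*z*w^3 + 96*a2*t*x + (-56)*a2*t^2*z*w + (-12)*a2^2*t*w^2 + (-18)*a1*w + (-18)*a1*z*w^2 + 24*a1*x*w^2 + (-30)*a1*t*z + 168*a1*t*x + (-64)*a1*t^2*z*w + (-24)*a1^2*w + (-3)*a0*z*w^2 + (-57)*a0*t*z + 24*a0*t*z*w^3 + 96*a0*t*x + (-56)*a0*t^2*z*w + (-24)*a0*a2*t*w^2 + (-12)*a0^2*t*w^2)) / ((4*t + 3)*(16*t^2 - 12*t + 9)) := by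
    funext u
    simp only [HD4]
    congr 1
    ring
  simp only [pdY]
  rw [e, deriv_quartic_div]
  congr 1
  ring

lemma pdZ_HD4 (a0 a1 a2 t x y w : ℂ) (z : ℂ) :
    pdZ (HD4 a0 a1 a2) t x y z w =
      ((-6)*z + (-24)*z*w^3 + (-60)*x + (-12)*x*y*w^2 + (-12)*x*y^2*w + 24*t*z*w + (-24)*t*z*w^4 + (-96)*t*x*w + 84*t*x*y + (-48)*t*x*y*w^3 + 24*t*x*y^2*w^2 + 48*t^2*z*w^2 + 48*t^2*x*y*w + (-24)*t^2*x*y^2 + (-24)*t^3*z + 9*a2*w^2 + (-21)*a2*t + 24*a2*t*w^3 + (-56)*a2*t^2*w + (-18)*a1*w^2 + (-30)*a1*t + (-64)*a1*t^2*w + (-3)*a0*w^2 + 12*a0*y*w + (-57)*a0*t + 24*a0*t*w^3 + (-24)*a0*t*y*w^2 + (-56)*a0*t^2*w + 24*a0*t^2*y) / ((4*t + 3)*(16*t^2 - 12*t + 9)) := by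
  have e : (fun s => HD4 a0 a1 a2 t x y s w)
      = fun u => (((0:ℂ))*u^4 + ((0:ℂ))*u^3 + ((-3) + (-12)*w^3 + 12*t*w + (-12)*t*w^4 + 24*t^2*w^2 + (-12)*t^3)*u^2
          + ((-60)*x + (-12)*x*y*w^2 + (-12)*x*y^2*w + (-96)*t*x*w + 84*t*x*y + (-48)*t*x*y*w^3 + 24*t*x*y^2*w^2 + 48*t^2*x*y*w + (-24)*t^2*x*y^2 + 9*a2*w^2 + (-21)*a2*t + 24*a2*t*w^3 + (-56)*a2*t^2*w + (-18)*a1*w^2 + (-30)*a1*t + (-64)*a1*t^2*w + (-3)*a0*w^2 + 12*a0*y*w + (-57)*a0*t + 24*a0*t*w^3 + (-24)*a0*t*y*w^2 + (-56)*a0*t^2*w + 24*a0*t^2*y)*u + (15*w + 24*x^2 + 24*x^2*y*w^2 + (-48)*x^2*y^2*w + 12*x^2*y^3 + (-24)*t*x^2*y + (-48)*t*x^2*y^2*w^2 + 48*t*x^2*y^3*w + (-12)*t*x^2*y^4 + (-32)*t^2*x*y + (-12)*a2*w + (-18)*a2*x*y*w + 27*a2*x*y^2 + 96*a2*t*x +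 48*a2*t*x*y*w^2 + (-24)*a2*t*x*y^2*w + (-12)*a2^2*t*w^2 + (-18)*a1*w + 24*a1*x*w^2 + (-84)*a1*x*y*w + 42*a1*x*y^2 + 168*a1*t*x + (-24)*a1^2*w + 6*a0*x*y*w + 3*a0*x*y^2 + 96*a0*t*x + 48*a0*t*x*y*w^2 + (-72)*a0*t*x*y^2*w + 24*a0*t*x*y^3 + (-27)*a0*a2*y + (-24)*a0*a2*t*w^2 + 24*a0*a2*t*y*w + (-42)*a0*a1*y + (-15)*a0^2*y + (-12)*a0^2*t*w^2 + 24*a0^2*t*y*w + (-12)*a0^2*t*y^2)) / ((4*t + 3)*(16*t^2 - 12*t + 9)) := by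
    funext u
    simp only [HD4]
    congr 1
    ring
  simp only [pdZ]
  rw [e, deriv_quartic_div]
  congr 1
  ring

lemma pdW_HD4 (a0 a1 a2 t x y z : ℂ) (w : ℂ) :
    pdW (HD4 a0 a1 a2) t x y z w =
      (15 + (-36)*z^2*w^2 + (-24)*x*y*z*w + (-12)*x*y^2*z + 48*x^2*y*w + (-48)*x^2*y^2 + 12*t*z^2 + (-48)*t*z^2*w^3 + (-96)*t*x*z + (-144)*t*x*y*z*w^2 + 48*t*x*y^2*z*w + (-96)*t*x^2*y^2*w + 48*t*x^2*y^3 + 48*t^2*z^2*w + 48*t^2*x*y*z + (-12)*a2 + 18*a2*z*w + (-18)*a2*x*y + 72*a2*t*z*w^2 + 96*a2*t*x*y*w + (-24)*a2*t*x*y^2 + (-56)*a2*t^2*z + (-24)*a2^2*t*w + (-18)*a1 + (-36)*a1*z*w + 48*a1*x*w + (-84)*a1*x*y + (-64)*a1*t^2*z + (-24)*a1^2 + (-6)*a0*z*w + 12*a0*y*z + 6*a0*x*y + 72*a0*t*z*w^2 + (-48)*a0*t*y*z*w + 96*a0*t*x*y*w + (-72)*a0*t*x*y^2 + (-56)*a0*t^2*z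 + (-48)*a0*a2*t*w + 24*a0*a2*t*y + (-24)*a0^2*t*w + 24*a0^2*t*y) / ((4*t + 3)*(16*t^2 - 12*t + 9)) := by
  have e : (fun s => HD4 a0 a1 a2 t x y z s)
      = fun u => (((-12)*t*z^2)*u^4 + ((-12)*z^2 + (-48)*t*x*y*z + 24*a2*t*z + 24*a0*t*z)*u^3 + ((-12)*x*y*z + 24*x^2*y + 24*t*x*y^2*z + (-48)*t*x^2*y^2 + 24*t^2*z^2 + 9*a2*z + 48*a2*t*x*y + (-12)*a2^2*t + (-18)*a1*z + 24*a1*x + (-3)*a0*z + (-24)*a0*t*y*z + 48*a0*t*x*y + (-24)*a0*a2*t + (-12)*a0^2*t)*u^2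
          + (15 + (-12)*x*y^2*z + (-48)*x^2*y^2 + 12*t*z^2 + (-96)*t*x*z + 48*t*x^2*y^3 + 48*t^2*x*y*z + (-12)*a2 + (-18)*a2*x*y + (-24)*a2*t*x*y^2 + (-56)*a2*t^2*z + (-18)*a1 + (-84)*a1*x*y + (-64)*a1*t^2*z + (-24)*a1^2 + 12*a0*y*z + 6*a0*x*y + (-72)*a0*t*x*y^2 + (-56)*a0*t^2*z + 24*a0*a2*t*y + 24*a0^2*t*y)*u + ((-3)*z^2 + (-60)*x*z + 24*x^2 + 12*x^2*y^3 + 84*t*x*y*z + (-24)*t*x^2*y + (-12)*t*x^2*y^4 + (-32)*t^2*x*y + (-24)*t^2*x*y^2*z + (-12)*t^3*z^2 + 27*a2*x*y^2 + (-21)*a2*t*z + 96*a2*t*x + 42*a1*x*y^2 + (-30)*a1*t*z + 168*a1*t*x + 3*a0*x*y^2 + (-57)*a0*t*z + 96*a0*t*x + 24*a0*t*x*y^3 + 24*a0*t^2*y*z + (-27)*a0*a2*y + (-42)*a0*a1*y + (-15)*a0^2*y + (-12)*a0^2*t*y^2)) / ((4*t + 3)*(16*t^2 - 12*t + 9)) :=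 by
    funext u
    simp only [HD4]
    congr 1
    ring
  simp only [pdW]
  rw [e, deriv_quartic_div]
  congr 1
  ring


theorem invariant_divisors_D4 (a0 a1 a2 : ℂ)
    (hrel : a0 + 2*a1 + a2 = 1) :
    -- f0 = x
    (a0 = 0 → ∃ g : ℂ → ℂ → ℂ → ℂ → ℂ → ℂ, ∀ t x y z w : ℂ,
      (4*t + 3)*(16*t^2 - 12*t + 9) ≠ 0 →
      totalDeriv (HD4 a0 a1 a2) (fun _ x _ _ _ => x) t x y z w
        = x * g t x y z w) ∧
    -- f1 = yw² - ty + 1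
    (a1 = 0 → ∃ g : ℂ → ℂ → ℂ → ℂ → ℂ → ℂ, ∀ t x y z w : ℂ,
      (4*t + 3)*(16*t^2 - 12*t + 9) ≠ 0 →
      totalDeriv (HD4 a0 a1 a2) (fun t _ y _ w => y*w^2 - t*y + 1) t x y z w
        = (y*w^2 - t*y + 1) * g t x y z w) ∧
    -- f2 = x + z
    (a2 = 0 → ∃ g : ℂ → ℂ → ℂ → ℂ → ℂ → ℂ, ∀ t x y z w : ℂ,
      (4*t + 3)*(16*t^2 - 12*t + 9) ≠ 0 →
      totalDeriv (HD4 a0 a1 a2) (fun _ x _ z _ => x + z) t x y z w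
        = (x + z) * g t x y z w) := by
  refine ⟨?_, ?_, ?_⟩
  · -- f0 = x
    intro h
    subst h
    refine ⟨fun t x y z w => ((-12)*z*w^2 + (-24)*y*z*w + 24*x*w^2 + (-96)*x*y*w + 36*x*y^2 + 84*t*z + (-48)*t*z*w^3 + 48*t*y*z*w^2 + (-24)*t*x + (-96)*t*x*y*w^2 + 144*t*x*y^2*w + (-48)*t*x*y^3 + (-32)*t^2 + 48*t^2*z*w + (-48)*t^2*y*z + (-18)*a2*w + 54*a2*y + 48*a2*t*w^2 + (-48)*a2*t*y*w + (-84)*a1*w + 84*a1*y) / ((4*t + 3)*(16*t^2 - 12*t + 9)), fun t x y z w hD => ?_⟩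
    have hT : pdT (fun _ x _ _ _ => (x:ℂ)) t x y z w = 0 := by
      simp [pdT]
    have hX : pdX (fun _ x _ _ _ => (x:ℂ)) t x y z w = 1 := by
      simp [pdX]
    have hY : pdY (fun _ x _ _ _ => (x:ℂ)) t x y z w = 0 := by
      simp [pdY]
    have hZ : pdZ (fun _ x _ _ _ => (x:ℂ)) t x y z w = 0 := by
      simp [pdZ]
    have hW : pdW (fun _ x _ _ _ => (x:ℂ)) t x y z w = 0 := by
      simp [pdW]
    have h1 : (4*t + 3 : ℂ) ≠ 0 := (mul_ne_zero_iff.mp hD).1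
    have h2 : (16*t^2 - 12*t + 9 : ℂ) ≠ 0 := (mul_ne_zero_iff.mp hD).2
    simp only [totalDeriv, hT, hX, hY, hZ, hW, pdY_HD4, mul_zero, mul_one,
      zero_add, add_zero, sub_zero]
    field_simp
    ring
  · -- f1
    intro h
    subst h
    have ha2 : a2 = 1 - a0 := by linear_combination hrel
    subst ha2
    refine ⟨fun t x y z w => (60*z*w^2 + (-27)*y + 12*y*z*w + (-48)*x*w^2 + 120*x*y*w + (-96)*t*w^2 + (-60)*t*z + 96*t*z*w^3 + 24*t*y*w + (-24)*t*y*z*w^2 + 48*t*x + 192*t*x*y*w^2 + (-144)*t*x*y^2*w + 24*t*x*y^3 + 96*t^2 + (-96)*t^2*z*w + 24*t^2*y*z + 96*a0*t*y*w + (-24)*a0*t*y^2) / ((4*t + 3)*(16*t^2 - 12*t + 9)), fun t x y z w hD => ?_⟩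
    have hT : pdT (fun t _ y _ w => (y*w^2 - t*y + 1:ℂ)) t x y z w = -y := by
      have e : (fun s => (y*w^2 - s*y + 1:ℂ))
          = fun u => (0:ℂ)*u^4 + 0*u^3 + 0*u^2 + (-y)*u + (y*w^2+1) := by
        funext u; ring
      simp only [pdT]
      rw [e, deriv_quartic]
      ring
    have hX : pdX (fun t _ y _ w => (y*w^2 - t*y + 1:ℂ)) t x y z w = 0 := by
      simp [pdX]
    have hY : pdY (fun t _ y _ w => (y*w^2 - t*y + 1:ℂ)) t x y z w = w^2 - t := by
      have e : (fun s => (s*w^2 - t*s + 1:ℂ))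
          = fun u => (0:ℂ)*u^4 + 0*u^3 + 0*u^2 + (w^2-t)*u + 1 := by
        funext u; ring
      simp only [pdY]
      rw [e, deriv_quartic]
      ring
    have hZ : pdZ (fun t _ y _ w => (y*w^2 - t*y + 1:ℂ)) t x y z w = 0 := by
      simp [pdZ]
    have hW : pdW (fun t _ y _ w => (y*w^2 - t*y + 1:ℂ)) t x y z w = 2*y*w := by
      have e : (fun s => (y*s^2 - t*y + 1:ℂ))
          = fun u => (0:ℂ)*u^4 + 0*u^3 + y*u^2 + 0*u + (1 - t*y) := by
        funext u; ring
      simp only [pdW]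
      rw [e, deriv_quartic]
      ring
    have h1 : (4*t + 3 : ℂ) ≠ 0 := (mul_ne_zero_iff.mp hD).1
    have h2 : (16*t^2 - 12*t + 9 : ℂ) ≠ 0 := (mul_ne_zero_iff.mp hD).2
    simp only [totalDeriv, hT, hX, hY, hZ, hW, pdX_HD4, pdZ_HD4, mul_zero, mul_one,
      zero_add, add_zero, sub_zero]
    have hI : (4*t + 3)*(16*t^2 - 12*t + 9) * ((4*t + 3)*(16*t^2 - 12*t + 9))⁻¹ = 1 :=
      mul_inv_cancel₀ hD
    simp only [div_eq_mul_inv]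
    linear_combination y * hI
  · -- f2
    intro h
    subst h
    have ha0 : a0 = 1 - 2*a1 := by linear_combination hrel
    subst ha0
    refine ⟨fun t x y z w => (6*w + (-36)*z*w^2 + 12*y + 24*x*w^2 + (-48)*x*y*w + (-12)*x*y^2 + 48*t*w^2 + 12*t*z + (-48)*t*z*w^3 + (-48)*t*y*w + (-24)*t*x + (-96)*t*x*y*w^2 + 48*t*x*y^2*w + (-32)*t^2 + 48*t^2*z*w + (-48)*a1*w + (-24)*a1*y + (-96)*a1*t*w^2 + 96*a1*t*y*w) / ((4*t + 3)*(16*t^2 - 12*t + 9)), fun t x y z w hD => ?_⟩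
    have hT : pdT (fun _ x _ z _ => (x + z:ℂ)) t x y z w = 0 := by
      simp [pdT]
    have hX : pdX (fun _ x _ z _ => (x + z:ℂ)) t x y z w = 1 := by
      simp [pdX]
    have hY : pdY (fun _ x _ z _ => (x + z:ℂ)) t x y z w = 0 := by
      simp [pdY]
    have hZ : pdZ (fun _ x _ z _ => (x + z:ℂ)) t x y z w = 1 := by
      have e : (fun s => (x + s:ℂ))
          = fun u => (0:ℂ)*u^4 + 0*u^3 + 0*u^2 + 1*u + x := by
        funext u; ring
      simp only [pdZ]
      rw [e, deriv_quartic]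
      ring
    have hW : pdW (fun _ x _ z _ => (x + z:ℂ)) t x y z w = 0 := by
      simp [pdW]
    have h1 : (4*t + 3 : ℂ) ≠ 0 := (mul_ne_zero_iff.mp hD).1
    have h2 : (16*t^2 - 12*t + 9 : ℂ) ≠ 0 := (mul_ne_zero_iff.mp hD).2
    simp only [totalDeriv, hT, hX, hY, hZ, hW, pdY_HD4, pdW_HD4, mul_zero, mul_one,
      zero_add, add_zero, sub_zero]
    field_simp
    ring
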